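/- For every n ≥ 2, if H ⊆ P satisfies condition (H1) in the incidence geometry G_n, then (4^n − 1)/3 ≤ |H|. -/

import Mathlib

/-- The symplectic vector space `V_n = (ZMod 2)^(2n)` of the n-qubit real Pauli group. -/
abbrev V (n : ℕ) : Type := Fin (2 * n) → ZMod 2

/-- The index `2i-1` (0-based: `2i`). -/
def i0 {n : ℕ} (i : Fin n) : Fin (2 * n) := ⟨2 * i.1, by have := i.isLt; omega⟩

/-- The index `2i` (0-based: `2i+1`). -/
def i1 {n : ℕ} (i : Fin n) : Fin (2 * n) := ⟨2 * i.1 + 1, by have := i.isLt; omega⟩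

/-- The symplectic form `⟨x,y⟩ = Σ_{i=1}^n (x_{2i−1} y_{2i} + x_{2i} y_{2i−1})`. -/
def sform {n : ℕ} (x y : V n) : ZMod 2 :=
  ∑ i : Fin n, (x (i0 i) * y (i1 i) + x (i1 i) * y (i0 i))

/-- The point set `P = V_n \ {0}` of the incidence geometry `G_n`. -/
def P (n : ℕ) : Set (V n) := {x | x ≠ 0}

/-- The line set `L = {{a,b,a+b} : a,b ∈ P, a ≠ b, ⟨a,b⟩ = 0}` of `G_n`. -/
def Lines (n : ℕ) : Set (Set (V n)) :=
  {l | ∃ a b : V n, a ∈ P n ∧ b ∈ P n ∧ a ≠ b ∧ sform a b = 0 ∧ l = {a, b, a + b}}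

/-- A subset `H ⊆ P` satisfies condition (H1) if every line meets it in exactly
one point or is contained in it. -/
def IsH1 {n : ℕ} (H : Set (V n)) : Prop :=
  H ⊆ P n ∧ ∀ l ∈ Lines n, (H ∩ l).ncard = 1 ∨ l ⊆ H

/-- A geometric hyperplane: a subset satisfying (H1) which is not the full point set. -/
def IsHyperplane {n : ℕ} (H : Set (V n)) : Prop := IsH1 H ∧ H ≠ P n

/-- `A ⊞ B`: the complement in `P` of the symmetric difference of `A` and `B`. -/
def boxAdd {n : ℕ} (A B : Set (V n)) : Set (V n) := P n \ (symmDiff A B)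

/-- The quadratic form `Q_0(x) = Σ_{i=1}^n x_{2i−1} x_{2i}`. -/
def Q0 {n : ℕ} (x : V n) : ZMod 2 := ∑ i : Fin n, x (i0 i) * x (i1 i)

/-- The quadratic form `Q_p(x) = Q_0(x) + ⟨p,x⟩`. -/
def Qf {n : ℕ} (p x : V n) : ZMod 2 := Q0 x + sform p x

/-- The perp-set hyperplane `C_p = {x ∈ P : ⟨p,x⟩ = 0}`. -/
def Cset {n : ℕ} (p : V n) : Set (V n) := {x ∈ P n | sform p x = 0}

/-- The quadric hyperplane `H_p = {x ∈ P : Q_p(x) = 0}`. -/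
def Hset {n : ℕ} (p : V n) : Set (V n) := {x ∈ P n | Qf p x = 0}

/-- The symplectic transvection `t_p : x ↦ x + ⟨p,x⟩·p`. -/
def tv {n : ℕ} (p : V n) (x : V n) : V n := x + sform p x • p


open Finset

lemma zmod2_add_self : ∀ x : ZMod 2, x + x = 0 := by decide

lemma vadd_self {n : ℕ} (x : V n) : x + x = 0 := by
  funext i; exact zmod2_add_self (x i)

lemma sform_symm {n : ℕ} (x y : V n) : sform x y = sform y x := by
  unfold sform; apply Finset.sum_congr rfl; intros; ring

lemma sform_add_right {n : ℕ} (a x y : V n) :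
    sform a (x + y) = sform a x + sform a y := by
  unfold sform
  rw [← Finset.sum_add_distrib]
  apply Finset.sum_congr rfl; intros; simp only [Pi.add_apply]; ring

lemma sform_zero_right {n : ℕ} (a : V n) : sform a 0 = 0 := by simp [sform]

lemma sform_self {n : ℕ} (a : V n) : sform a a = 0 := by
  unfold sform
  apply Finset.sum_eq_zero; intro i _
  rw [mul_comm (a (i1 i))]
  exact zmod2_add_self _

lemma sform_single1 {n : ℕ} (a : V n) (i : Fin n) :
    sform a (Pi.single (i1 i) (1 : ZMod 2)) = a (i0 i) := by
  unfold sform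
  rw [Finset.sum_eq_single i]
  · have h1 : (i0 i : Fin (2*n)) ≠ i1 i := by
      simp only [i0, i1, ne_eq, Fin.ext_iff]; omega
    rw [Pi.single_eq_same, Pi.single_eq_of_ne h1]
    ring
  · intro k _ hk
    have hk' : (k : Fin n).1 ≠ i.1 := fun h => hk (Fin.ext h)
    have h1 : (i1 i : Fin (2*n)) ≠ i1 k := by
      simp only [i0, i1, ne_eq, Fin.ext_iff]; omega
    have h2 : (i1 i : Fin (2*n)) ≠ i0 k := by
      simp only [i0, i1, ne_eq, Fin.ext_iff]; omega
    rw [Pi.single_eq_of_ne' h1, Pi.single_eq_of_ne' h2]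
    ring
  · simp

lemma sform_single0 {n : ℕ} (a : V n) (i : Fin n) :
    sform a (Pi.single (i0 i) (1 : ZMod 2)) = a (i1 i) := by
  unfold sform
  rw [Finset.sum_eq_single i]
  · have h1 : (i1 i : Fin (2*n)) ≠ i0 i := by
      simp only [i0, i1, ne_eq, Fin.ext_iff]; omega
    rw [Pi.single_eq_same, Pi.single_eq_of_ne h1]
    ring
  · intro k _ hk
    have hk' : (k : Fin n).1 ≠ i.1 := fun h => hk (Fin.ext h)
    have h1 : (i0 i : Fin (2*n)) ≠ i1 k := by
      simp only [i0, i1, ne_eq, Fin.ext_iff]; omega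
    have h2 : (i0 i : Fin (2*n)) ≠ i0 k := by
      simp only [i0, i1, ne_eq, Fin.ext_iff]; omega
    rw [Pi.single_eq_of_ne' h1, Pi.single_eq_of_ne' h2]
    ring
  · simp

lemma exists_sform_one {n : ℕ} (a : V n) (ha : a ≠ 0) : ∃ c : V n, sform a c = 1 := by
  obtain ⟨j, hj⟩ := Function.ne_iff.mp ha
  have hj1 : a j = 1 := by
    have : ∀ x : ZMod 2, x ≠ 0 → x = 1 := by decide
    exact this _ (by simpa using hj)
  have hjlt := j.isLt
  set i : Fin n := ⟨j.1 / 2, by omega⟩ with hi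
  rcases Nat.even_or_odd j.1 with he | ho
  · have hji : j = i0 i := by
      simp only [i0, Fin.ext_iff, hi]
      obtain ⟨m, hm⟩ := he; omega
    exact ⟨Pi.single (i1 i) 1, by rw [sform_single1, ← hji, hj1]⟩
  · have hji : j = i1 i := by
      simp only [i1, Fin.ext_iff, hi]
      obtain ⟨m, hm⟩ := ho; omega
    exact ⟨Pi.single (i0 i) 1, by rw [sform_single0, ← hji, hj1]⟩

lemma card_kernel {n : ℕ} (a : V n) (ha : a ≠ 0) :
    (Finset.univ.filter (fun b : V n => sform a b = 0)).card = 2 ^ (2 * n - 1) := by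
  obtain ⟨c, hc⟩ := exists_sform_one a ha
  have hn : 0 < n := by
    rcases Nat.eq_zero_or_pos n with rfl | hn
    · simp [sform] at hc
    · exact hn
  have key : (Finset.univ.filter (fun b : V n => sform a b = 0)).card
      = (Finset.univ.filter (fun b : V n => ¬ sform a b = 0)).card := by
    apply Finset.card_nbij' (fun b => b + c) (fun b => b + c)
    · intro b hb
      simp only [Finset.mem_coe, Finset.mem_filter, Finset.mem_univ, true_and] at hb ⊢
      rw [sform_add_right, hb, hc]; decide
    · intro b hb
      simp only [Finset.mem_coe, Finset.mem_filter, Finset.mem_univ, true_and] at hb ⊢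
      rw [sform_add_right, hc]
      have : ∀ x : ZMod 2, x ≠ 0 → x + 1 = 0 := by decide
      exact this _ hb
    · intro b _; show b + c + c = b; rw [add_assoc, vadd_self, add_zero]
    · intro b _; show b + c + c = b; rw [add_assoc, vadd_self, add_zero]
  have htot := Finset.card_filter_add_card_filter_not
    (s := (Finset.univ : Finset (V n))) (fun b : V n => sform a b = 0)
  rw [← key] at htot
  have hcard : (Finset.univ : Finset (V n)).card = 2 ^ (2 * n) := by
    simp [Finset.card_univ]
  have h2 : 2 ^ (2 * n) = 2 ^ (2 * n - 1) * 2 := by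
    rw [← pow_succ]; congr 1; omega
  have hmul : (Finset.univ.filter (fun b : V n => sform a b = 0)).card * 2
      = 2 ^ (2 * n - 1) * 2 := by
    rw [← h2, ← hcard, ← htot]; ring
  exact Nat.eq_of_mul_eq_mul_right (by norm_num) hmul

lemma pcs_card {n : ℕ} (a : V n) (ha : a ≠ 0) :
    (Finset.univ.filter (fun b : V n => b ≠ 0 ∧ b ≠ a ∧ sform a b = 0)).card
      = 2 ^ (2 * n - 1) - 2 := by
  have hsub : Finset.univ.filter (fun b : V n => b ≠ 0 ∧ b ≠ a ∧ sform a b = 0)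
      = (Finset.univ.filter (fun b : V n => sform a b = 0)) \ {0, a} := by
    ext b
    simp only [Finset.mem_filter, Finset.mem_univ, true_and, Finset.mem_sdiff,
      Finset.mem_insert, Finset.mem_singleton]
    tauto
  rw [hsub, Finset.card_sdiff_of_subset]
  · rw [card_kernel a ha]
    congr 1
    rw [Finset.card_insert_of_notMem (by simpa using (Ne.symm ha))]
    simp
  · intro b hb
    simp only [Finset.mem_insert, Finset.mem_singleton] at hb
    simp only [Finset.mem_filter, Finset.mem_univ, true_and]
    rcases hb with rfl | rfl
    · exact sform_zero_right _
    · exact sform_self _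

theorem stmt1 (n : ℕ) (hn : 2 ≤ n) (H : Set (V n)) (hH : IsH1 H) :
    ((4 ^ n - 1 : ℚ)) / 3 ≤ (H.ncard : ℚ) := by
  classical
  set D : ℕ := 2 ^ (2 * n - 1) - 2 with hD
  set Pc : V n → Finset (V n) :=
    fun a => Finset.univ.filter (fun b : V n => b ≠ 0 ∧ b ≠ a ∧ sform a b = 0) with hPc
  have hPcCard : ∀ a : V n, a ≠ 0 → (Pc a).card = D := fun a ha => pcs_card a ha
  set Pfin : Finset (V n) := Finset.univ.filter (fun a : V n => a ≠ 0) with hPfin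
  set s : Finset (V n × V n) := Pfin.biUnion (fun a => (Pc a).image (fun b => (a, b))) with hs
  have hmem : ∀ p : V n × V n, p ∈ s ↔
      (p.1 ≠ 0 ∧ p.2 ≠ 0 ∧ p.2 ≠ p.1 ∧ sform p.1 p.2 = 0) := by
    intro p
    simp only [hs, Finset.mem_biUnion, Finset.mem_image, hPfin, hPc,
      Finset.mem_filter, Finset.mem_univ, true_and]
    constructor
    · rintro ⟨a, ha, b, ⟨hb0, hba, hf⟩, rfl⟩
      exact ⟨ha, hb0, hba, hf⟩
    · rintro ⟨h1, h2, h3, h4⟩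
      exact ⟨p.1, h1, p.2, ⟨h2, h3, h4⟩, rfl⟩
  have hscard : s.card = (4 ^ n - 1) * D := by
    rw [hs, Finset.card_biUnion]
    · have heach : ∀ a ∈ Pfin, ((Pc a).image (fun b => (a, b))).card = D := by
        intro a ha
        have hinj : Function.Injective (fun b : V n => ((a, b) : V n × V n)) := by
          intro x y hxy
          exact (Prod.ext_iff.mp hxy).2
        rw [Finset.card_image_of_injective _ hinj]
        exact hPcCard a (by simpa [hPfin] using ha)
      rw [Finset.sum_congr rfl heach, Finset.sum_const, smul_eq_mul]
      congr 1
      have hPe : Pfin = Finset.univ \ {0} := by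
        ext x; simp [hPfin]
      rw [hPe, Finset.card_sdiff_of_subset (by simp), Finset.card_singleton, Finset.card_univ]
      simp only [Fintype.card_fun, ZMod.card, Fintype.card_fin]
      rw [show (4:ℕ)^n = 2^(2*n) by rw [pow_mul]; norm_num]
    · intro a _ b _ hab
      apply Finset.disjoint_left.mpr
      rintro p hp hq
      simp only [Finset.mem_image] at hp hq
      obtain ⟨x, _, rfl⟩ := hp
      obtain ⟨y, _, h⟩ := hq
      exact hab (by simpa using (congrArg Prod.fst h).symm)
  have hHfin : H.Finite := Set.toFinite H
  set Hfin : Finset (V n) := hHfin.toFinset with hHf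
  set F : V n → Finset (V n × V n) := fun h =>
    ((Pc h).image (fun b => (h, b))) ∪ ((Pc h).image (fun a => (a, h)))
      ∪ ((Pc h).image (fun a => (a, a + h))) with hF
  have hFcard : ∀ h : V n, h ≠ 0 → (F h).card ≤ 3 * D := by
    intro h hne
    have h1 : (F h).card ≤ (Pc h).card + (Pc h).card + (Pc h).card := by
      refine le_trans (Finset.card_union_le _ _) ?_
      gcongr ?_ + ?_
      · refine le_trans (Finset.card_union_le _ _) ?_
        gcongr <;> exact Finset.card_image_le
      · exact Finset.card_image_le
    rw [hPcCard h hne] at h1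
    omega
  have hsub : s ⊆ Hfin.biUnion F := by
    intro p hp
    rw [hmem] at hp
    obtain ⟨a, b⟩ := p
    obtain ⟨h1, h2, h3, h4⟩ := hp
    simp only at h1 h2 h3 h4
    have hline : ({a, b, a+b} : Set (V n)) ∈ Lines n :=
      ⟨a, b, h1, h2, Ne.symm h3, h4, rfl⟩
    obtain ⟨h, hhH, hhl⟩ : ∃ h, h ∈ H ∧ h ∈ ({a, b, a+b} : Set (V n)) := by
      rcases hH.2 _ hline with hc | hc
      · obtain ⟨x, hx⟩ := Set.ncard_eq_one.mp hc
        have hx' : x ∈ H ∩ {a, b, a+b} := hx ▸ rfl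
        exact ⟨x, hx'.1, hx'.2⟩
      · exact ⟨a, hc (by simp), by simp⟩
    have hh0 : h ≠ 0 := hH.1 hhH
    refine Finset.mem_biUnion.mpr ⟨h, by rw [hHf]; exact hHfin.mem_toFinset.mpr hhH, ?_⟩
    simp only [Set.mem_insert_iff, Set.mem_singleton_iff] at hhl
    rcases hhl with rfl | rfl | rfl
    · exact Finset.mem_union.mpr (Or.inl (Finset.mem_union.mpr (Or.inl
        (Finset.mem_image.mpr ⟨b, by simp [hPc, h2, h3, h4], rfl⟩))))
    · refine Finset.mem_union.mpr (Or.inl (Finset.mem_union.mpr (Or.inr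
        (Finset.mem_image.mpr ⟨a, ?_, rfl⟩))))
      simp only [hPc, Finset.mem_filter, Finset.mem_univ, true_and]
      exact ⟨h1, Ne.symm h3, by rw [sform_symm]; exact h4⟩
    · refine Finset.mem_union.mpr (Or.inr (Finset.mem_image.mpr ⟨a, ?_, ?_⟩))
      · simp only [hPc, Finset.mem_filter, Finset.mem_univ, true_and]
        refine ⟨h1, ?_, ?_⟩
        · intro heq
          apply h2
          have := congrArg (fun z => a + z) heq.symm
          simpa [← add_assoc, vadd_self] using this
        · rw [sform_symm, sform_add_right, sform_self, zero_add]
          exact h4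
      · show (a, a + (a + b)) = (a, b)
        rw [← add_assoc, vadd_self, zero_add]
  have hupper : s.card ≤ Hfin.card * (3 * D) := by
    calc s.card ≤ (Hfin.biUnion F).card := Finset.card_le_card hsub
      _ ≤ ∑ h ∈ Hfin, (F h).card := Finset.card_biUnion_le
      _ ≤ ∑ _h ∈ Hfin, 3 * D := Finset.sum_le_sum
          (fun h hh => hFcard h (hH.1 ((hHfin.mem_toFinset).mp hh)))
      _ = Hfin.card * (3 * D) := by rw [Finset.sum_const, smul_eq_mul]
  have hDpos : 0 < D := by
    have h8 : 2 ^ 3 ≤ 2 ^ (2*n-1) := Nat.pow_le_pow_right (by norm_num) (by omega)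
    simp only [hD]; omega
  have hnat : 4 ^ n - 1 ≤ 3 * H.ncard := by
    have hHn : H.ncard = Hfin.card := Set.ncard_eq_toFinset_card H hHfin
    have hmul : (4^n - 1) * D ≤ (3 * Hfin.card) * D := by
      rw [← hscard]
      calc s.card ≤ Hfin.card * (3*D) := hupper
        _ = (3*Hfin.card)*D := by ring
    have := Nat.le_of_mul_le_mul_right hmul hDpos
    omega
  have h4 : (1:ℕ) ≤ 4 ^ n := Nat.one_le_pow _ _ (by norm_num)
  rw [div_le_iff₀ (by norm_num : (0:ℚ) < 3)]
  have hq := (Nat.cast_le (α := ℚ)).mpr hnat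
  push_cast [Nat.cast_sub h4] at hq
  linarith
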